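/- Let A : g → g be an ℝ-linear map such that A(E₅) = E₅, A(E₆) = E₆, A preserves V = span(E₁,E₂,E₃,E₄), the restriction of A to V is orthogonal, and the induced action of A on the second exterior power of V* fixes each of the three 2-forms e¹∧e² + e³∧e⁴, e¹∧e³ + e⁴∧e², e¹∧e⁴ + e²∧e³. Then A is a Lie algebra automorphism of g, i.e. A[X,Y] = [AX,AY] for all X,Y ∈ g. -/
import Mathlib


open scoped ComplexOrder

noncomputable section

/-- The underlying real vector space of the Lie algebra `g` (coordinates w.r.t. `E₁,…,E₆`). -/
abbrev GV : Type := Fin 6 → ℝ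

/-- The basis vectors `E₁,…,E₆` (indexed by `0,…,5`). -/
def E (i : Fin 6) : GV := Pi.single i 1

/-- The Lie bracket of `g`: the only nonzero brackets of basis vectors are
`[E₁,E₃] = -E₅`, `[E₂,E₄] = E₅`, `[E₁,E₄] = -E₆`, `[E₂,E₃] = -E₆`. -/
def br (X Y : GV) : GV :=
  ![0, 0, 0, 0,
    -(X 0 * Y 2 - X 2 * Y 0) + (X 1 * Y 3 - X 3 * Y 1),
    -(X 0 * Y 3 - X 3 * Y 0) - (X 1 * Y 2 - X 2 * Y 1)]

/-- `J` is a complex structure: `J ∘ J = -id`. -/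
def IsCpxStr (J : Module.End ℝ GV) : Prop := ∀ x, J (J x) = -x

/-- Integrability (Newlander–Nirenberg) condition. -/
def Integrable (J : Module.End ℝ GV) : Prop :=
  ∀ X Y, br (J X) (J Y) = br X Y + J (br (J X) Y) + J (br X (J Y))

/-- `J` induces the standard orientation of `g`. -/
def PosOrient (J : Module.End ℝ GV) : Prop :=
  ∃ v₁ v₂ v₃ : GV,
    0 < (Matrix.of fun i j => ![v₁, J v₁, v₂, J v₂, v₃, J v₃] i j).det

/-- `C⁺(g)`: integrable complex structures inducing the standard orientation. -/
def Cplus : Set (Module.End ℝ GV) := {J | IsCpxStr J ∧ Integrable J ∧ PosOrient J}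

/-- The inner product making `E₁,…,E₆` orthonormal. -/
def inner6 (x y : GV) : ℝ := ∑ i, x i * y i

def IsOrthog (J : Module.End ℝ GV) : Prop := ∀ x y, inner6 (J x) (J y) = inner6 x y

/-- `C⁺(g,g)`: orthogonal members of `C⁺(g)`. -/
def Cgg : Set (Module.End ℝ GV) := {J | J ∈ Cplus ∧ IsOrthog J}

lemma le46 : (4:ℕ) ≤ 6 := by norm_num

/-- Determinant of `(w̄₁, Ĵw̄₁, w̄₂, Ĵw̄₂)` w.r.t. the basis `(Ē₁,…,Ē₄)` of `g/[g,g]`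
(the coordinates of the class of `v` are the first four coordinates of `v`). -/
def hatDet (J : Module.End ℝ GV) (w₁ w₂ : GV) : ℝ :=
  (Matrix.of fun (i : Fin 4) (j : Fin 4) =>
    ![w₁, J w₁, w₂, J w₂] i (Fin.castLE le46 j)).det

/-- `C₊`: members of `C⁺(g)` whose induced structure on `g/[g,g]` is positively oriented. -/
def CplusP : Set (Module.End ℝ GV) :=
  {J | J ∈ Cplus ∧ ∃ w₁ w₂ : GV, 0 < hatDet J w₁ w₂}

/-- `C₋`: members of `C⁺(g)` whose induced structure on `g/[g,g]` is negatively oriented. -/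
def CplusM : Set (Module.End ℝ GV) :=
  {J | J ∈ Cplus ∧ ∃ w₁ w₂ : GV, hatDet J w₁ w₂ < 0}

/-- `ℂ ⊗ g*`, identified with coordinate vectors with respect to the dual basis `e¹,…,e⁶`. -/
abbrev MC : Type := Fin 6 → ℂ

/-- Evaluation of a complexified 1-form on a vector of `g`. -/
def ev (α : MC) (v : GV) : ℂ := ∑ i, α i * v i

/-- The dual basis `e¹,…,e⁶` inside `ℂ ⊗ g*`. -/
def eC (i : Fin 6) : MC := Pi.single i 1

def w1 : MC := eC 0 + Complex.I • eC 1
def w2 : MC := eC 2 + Complex.I • eC 3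
def w3 : MC := eC 4 + Complex.I • eC 5
/-- `ω̄¹` -/
def w1b : MC := eC 0 - Complex.I • eC 1
/-- `ω̄²` -/
def w2b : MC := eC 2 - Complex.I • eC 3
/-- `ω̄³` -/
def w3b : MC := eC 4 - Complex.I • eC 5

/-- The space of `(1,0)`-forms of `J`, a complex subspace of `ℂ ⊗ g*`. -/
def holSub (J : Module.End ℝ GV) : Submodule ℂ MC where
  carrier := {α | ∀ v : GV, ev α (J v) = Complex.I * ev α v}
  add_mem' := by
    intro a b ha hb v
    simp only [ev, Pi.add_apply, add_mul, Finset.sum_add_distrib] at *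
    rw [ha v, hb v]; ring
  zero_mem' := by intro v; simp [ev]
  smul_mem' := by
    intro c α hα v
    simp only [ev, Pi.smul_apply, smul_eq_mul, mul_assoc, ← Finset.mul_sum] at *
    rw [hα v]; ring
/-- `(α₁, α₂, α₃)` is a basis of the space of `(1,0)`-forms of `J`. -/
def IsHolBasis (J : Module.End ℝ GV) (α₁ α₂ α₃ : MC) : Prop :=
  LinearIndependent ℂ ![α₁, α₂, α₃] ∧ Submodule.span ℂ {α₁, α₂, α₃} = holSub J

/-- Inclusion into the exterior algebra of `ℂ ⊗ g*`; wedge products are multiplications there. -/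
def ι : MC →ₗ[ℂ] ExteriorAlgebra ℂ MC := ExteriorAlgebra.ι ℂ

/-- The standard bi-invariant complex structure `J₀`. -/
def J0 : Module.End ℝ GV :=
  Matrix.mulVecLin !![0,-1,0,0,0,0; 1,0,0,0,0,0; 0,0,0,-1,0,0;
                      0,0,1,0,0,0; 0,0,0,0,0,-1; 0,0,0,0,1,0]

/-- The vector space underlying `V = span(E₁,E₂,E₃,E₄)`. -/
abbrev W4 : Type := Fin 4 → ℝ

/-- Inclusion `V = span(E₁,…,E₄) ↪ g`. -/
def incl (w : W4) : GV := fun i => if h : (i : ℕ) < 4 then w ⟨i, h⟩ else 0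

def det4W (v : Fin 4 → W4) : ℝ := (Matrix.of fun i j => v i j).det

/-- The topology on the space of `ℝ`-linear endomorphisms of `g`
(as a subspace of the space of all maps `g → g`). -/
instance : TopologicalSpace (Module.End ℝ GV) :=
  TopologicalSpace.induced (fun f => (f : GV → GV)) inferInstance

/-- The span of `E₁,E₂,E₃,E₄`. -/
def V4span : Submodule ℝ GV := Submodule.span ℝ {E 0, E 1, E 2, E 3}

/-- `(e¹∧e² + e³∧e⁴)(x,y)` -/
def f1 (x y : GV) : ℝ := (x 0 * y 1 - x 1 * y 0) + (x 2 * y 3 - x 3 * y 2)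
/-- `(e¹∧e³ + e⁴∧e²)(x,y)` -/
def f2 (x y : GV) : ℝ := (x 0 * y 2 - x 2 * y 0) + (x 3 * y 1 - x 1 * y 3)
/-- `(e¹∧e⁴ + e²∧e³)(x,y)` -/
def f3 (x y : GV) : ℝ := (x 0 * y 3 - x 3 * y 0) + (x 1 * y 2 - x 2 * y 1)

/-- Projection of `g` onto the first four coordinates. -/
def P4 (x : GV) : GV := fun i => if (i : ℕ) < 4 then x i else 0

lemma P40 (x : GV) : P4 x 0 = x 0 := rfl
lemma P41 (x : GV) : P4 x 1 = x 1 := rfl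
lemma P42 (x : GV) : P4 x 2 = x 2 := rfl
lemma P43 (x : GV) : P4 x 3 = x 3 := rfl
lemma P44 (x : GV) : P4 x 4 = 0 := rfl
lemma P45 (x : GV) : P4 x 5 = 0 := rfl

lemma br0 (X Y : GV) : br X Y 0 = 0 := rfl
lemma br1 (X Y : GV) : br X Y 1 = 0 := rfl
lemma br2 (X Y : GV) : br X Y 2 = 0 := rfl
lemma br3 (X Y : GV) : br X Y 3 = 0 := rfl
lemma br4 (X Y : GV) : br X Y 4 = -(X 0 * Y 2 - X 2 * Y 0) + (X 1 * Y 3 - X 3 * Y 1) := rfl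
lemma br5 (X Y : GV) : br X Y 5 = -(X 0 * Y 3 - X 3 * Y 0) - (X 1 * Y 2 - X 2 * Y 1) := rfl

lemma P4_decomp (x : GV) : x = P4 x + x 4 • E 4 + x 5 • E 5 := by
  funext i
  fin_cases i <;>
    simp [P40, P41, P42, P43, P44, P45, E, Pi.single]

lemma P4_mem (x : GV) : P4 x ∈ V4span := by
  have h : P4 x = x 0 • E 0 + x 1 • E 1 + x 2 • E 2 + x 3 • E 3 := by
    funext i
    fin_cases i <;>
      simp [P40, P41, P42, P43, P44, P45, E, Pi.single]
  rw [h]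
  apply Submodule.add_mem _ (Submodule.add_mem _ (Submodule.add_mem _ ?_ ?_) ?_) ?_ <;>
    exact Submodule.smul_mem _ _ (Submodule.subset_span (by simp))

lemma br_eq (X Y : GV) : br X Y = (-f2 X Y) • E 4 + (-f3 X Y) • E 5 := by
  funext i
  fin_cases i <;>
    simp [br0, br1, br2, br3, br4, br5, f2, f3, E, Pi.single] <;> ring

/-- a map fixing `E₅`, `E₆`, preserving `V = span(E₁,…,E₄)` orthogonally
and fixing the three self-dual 2-forms on `V` is a Lie algebra automorphism of `g`. -/
theorem stmt19 (A : Module.End ℝ GV)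
    (h5 : A (E 4) = E 4) (h6 : A (E 5) = E 5)
    (hpres : ∀ x ∈ V4span, A x ∈ V4span)
    (horth : ∀ x ∈ V4span, ∀ y ∈ V4span, inner6 (A x) (A y) = inner6 x y)
    (hf1 : ∀ x ∈ V4span, ∀ y ∈ V4span, f1 (A x) (A y) = f1 x y)
    (hf2 : ∀ x ∈ V4span, ∀ y ∈ V4span, f2 (A x) (A y) = f2 x y)
    (hf3 : ∀ x ∈ V4span, ∀ y ∈ V4span, f3 (A x) (A y) = f3 x y) :
    ∀ X Y : GV, A (br X Y) = br (A X) (A Y) := by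
  intro X Y
  -- coordinates 0..3 of A Z agree with those of A (P4 Z)
  have hcoord : ∀ Z : GV, ∀ i : Fin 6, (i : ℕ) < 4 → A Z i = A (P4 Z) i := by
    intro Z i hi
    have h : A Z = A (P4 Z) + Z 4 • E 4 + Z 5 • E 5 := by
      conv_lhs => rw [P4_decomp Z]
      simp [map_add, map_smul, h5, h6]
    rw [h]
    have h4 : E 4 i = 0 := by fin_cases i <;> simp_all [E, Pi.single] <;> omega
    have h5' : E 5 i = 0 := by fin_cases i <;> simp_all [E, Pi.single] <;> omega
    simp [h4, h5']
  have hcX0 := hcoord X 0 (by decide)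
  have hcX1 := hcoord X 1 (by decide)
  have hcX2 := hcoord X 2 (by decide)
  have hcX3 := hcoord X 3 (by decide)
  have hcY0 := hcoord Y 0 (by decide)
  have hcY1 := hcoord Y 1 (by decide)
  have hcY2 := hcoord Y 2 (by decide)
  have hcY3 := hcoord Y 3 (by decide)
  have hf2' : f2 (A X) (A Y) = f2 X Y := by
    have := hf2 (P4 X) (P4_mem X) (P4 Y) (P4_mem Y)
    unfold f2 at this ⊢
    rw [hcX0, hcX1, hcX2, hcX3, hcY0, hcY1, hcY2, hcY3, this]
    simp [P40, P41, P42, P43]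
  have hf3' : f3 (A X) (A Y) = f3 X Y := by
    have := hf3 (P4 X) (P4_mem X) (P4 Y) (P4_mem Y)
    unfold f3 at this ⊢
    rw [hcX0, hcX1, hcX2, hcX3, hcY0, hcY1, hcY2, hcY3, this]
    simp [P40, P41, P42, P43]
  rw [br_eq X Y, br_eq (A X) (A Y), hf2', hf3']
  simp [map_add, map_smul, h5, h6]

end
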